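/- For every w with w_l ≤ w ≤ w_u, the measure θ^w belongs to I, w_{θ^w} = w, and the constant function ζ(t) = θ^w for all t ≥ 0 is a fluid model solution with initial measure θ^w; i.e., θ^w is an invariant state of the fluid model. -/

import Mathlib

open MeasureTheory Set Filter Topology
open scoped ENNReal

noncomputable section

namespace OverloadedFIFO

/-- The complement `G(x) = Γ((x, ∞))` of the cumulative distribution function of `Γ`. -/
def Gk (Γ : MeasureTheory.Measure ℝ) (x : ℝ) : ℝ := (Γ (Set.Ioi x)).toReal

/-- Model data: `K` job classes with arrival rates `lam`, service rates `mu`, and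
deadline (patience) distributions `Γ`, in the overloaded regime `ρ > 1`.  Each `Γ k` is a
Borel probability measure on `[0,∞)` (no mass on negatives), with continuous c.d.f.
(no atoms, in particular `Γ k {0} = 0`) and finite mean. -/
structure Data (K : ℕ) where
  lam : Fin K → ℝ
  mu : Fin K → ℝ
  Γ : Fin K → MeasureTheory.Measure ℝ
  lam_pos : ∀ k, 0 < lam k
  mu_pos : ∀ k, 0 < mu k
  Γ_prob : ∀ k, MeasureTheory.IsProbabilityMeasure (Γ k)
  Γ_null_neg : ∀ k, Γ k (Set.Iio 0) = 0
  Γ_noAtom : ∀ k, ∀ x : ℝ, Γ k {x} = 0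
  Γ_finite_mean : ∀ k, MeasureTheory.Integrable id (Γ k)
  rho_gt_one : 1 < ∑ k, lam k / mu k

instance {K : ℕ} (D : Data K) (k : Fin K) : IsProbabilityMeasure (D.Γ k) := D.Γ_prob k

/-- `ρ_k = λ_k / μ_k`. -/
def Data.rho {K : ℕ} (D : Data K) (k : Fin K) : ℝ := D.lam k / D.mu k

/-- `ρ = Σ_k ρ_k`. -/
def Data.rhoTot {K : ℕ} (D : Data K) : ℝ := ∑ k, D.rho k

/-- A workload fluid model solution: a nonnegative function `w` on `[0,∞)` satisfying
`w(t) = w(0) + Σ_k ρ_k ∫_0^t G_k(w(s)) ds − t` for all `t ≥ 0`. -/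
def IsWorkloadSol {K : ℕ} (D : Data K) (w : ℝ → ℝ) : Prop :=
  (∀ t : ℝ, 0 ≤ t → 0 ≤ w t) ∧
  (∀ k : Fin K, ∀ t : ℝ, 0 ≤ t →
    IntervalIntegrable (fun s => Gk (D.Γ k) (w s)) volume 0 t) ∧
  (∀ t : ℝ, 0 ≤ t →
    w t = w 0 + (∑ k, D.rho k * ∫ s in (0:ℝ)..t, Gk (D.Γ k) (w s)) - t)

/-- `w_l = sup {u ≥ 0 : Σ_k ρ_k G_k(u) > 1}`. -/
def wl {K : ℕ} (D : Data K) : ℝ :=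
  sSup {u : ℝ | 0 ≤ u ∧ 1 < ∑ k, D.rho k * Gk (D.Γ k) u}

/-- `w_u = sup {u ≥ 0 : Σ_k ρ_k G_k(u) ≥ 1}`. -/
def wu {K : ℕ} (D : Data K) : ℝ :=
  sSup {u : ℝ | 0 ≤ u ∧ 1 ≤ ∑ k, D.rho k * Gk (D.Γ k) u}

/-- `d_max = max_k sup {x ≥ 0 : G_k(x) > 0} ∈ (0,∞]`, as an extended nonnegative real. -/
def dmax {K : ℕ} (D : Data K) : ℝ≥0∞ :=
  ⨆ k, sSup (ENNReal.ofReal '' {x : ℝ | 0 ≤ x ∧ 0 < Gk (D.Γ k) x})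

/-- `τ(t) = inf {s ∈ [0,t] : w(s) + s ≥ t}`. -/
def tauF (w : ℝ → ℝ) (t : ℝ) : ℝ := sInf {s : ℝ | 0 ≤ s ∧ s ≤ t ∧ t ≤ w s + s}

/-- The nonnegative quadrant `[0,∞)²`. -/
def Q : Set (ℝ × ℝ) := {p | 0 ≤ p.1 ∧ 0 ≤ p.2}

/-- The shift `B_x = {y ∈ [0,∞)² : y − x ∈ B}` of a set `B ⊆ [0,∞)²`. -/
def shift (B : Set (ℝ × ℝ)) (x : ℝ × ℝ) : Set (ℝ × ℝ) :=
  {y | y ∈ Q ∧ (y.1 - x.1, y.2 - x.2) ∈ B}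

/-- Diagonal shift `B_t = B_{(t,t)}`. -/
def shiftd (B : Set (ℝ × ℝ)) (t : ℝ) : Set (ℝ × ℝ) := shift B (t, t)

/-- The set `C = ([0,∞)×{0}) ∪ ({0}×[0,∞))`. -/
def Cset : Set (ℝ × ℝ) := {p | (0 ≤ p.1 ∧ p.2 = 0) ∨ (p.1 = 0 ∧ 0 ≤ p.2)}

/-- The `κ`-enlargement `B^κ = {x ∈ [0,∞)² : inf_{y ∈ B} ‖x−y‖ < κ}` (Euclidean norm). -/
def enlarge (B : Set (ℝ × ℝ)) (κ : ℝ) : Set (ℝ × ℝ) :=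
  {x | x ∈ Q ∧ ∃ y ∈ B, Real.sqrt ((x.1 - y.1) ^ 2 + (x.2 - y.2) ^ 2) < κ}

/-- `w_ϑ = sup {x ≥ 0 : ϑ_+([x,∞)×[0,∞)) > 0}` for a `K`-tuple `ϑ` of measures on `[0,∞)²`. -/
def wMeas {K : ℕ} (ϑ : Fin K → MeasureTheory.Measure (ℝ × ℝ)) : ℝ :=
  sSup {x : ℝ | 0 ≤ x ∧ 0 < ∑ k, ϑ k (Set.Ici x ×ˢ Set.Ici (0:ℝ))}

/-- Membership in the set `I` of admissible initial measures: each `ϑ k` is a finite Borel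
measure on `[0,∞)²`; (I.1) the superposition charges no corner set `C_x`, `x ∈ [0,∞)²`;
(I.2) `w_ϑ < ∞`; (I.3) `max_k G_k(w_ϑ − ε) > 0` for every `ε > 0`. -/
def MemI {K : ℕ} (D : Data K) (ϑ : Fin K → MeasureTheory.Measure (ℝ × ℝ)) : Prop :=
  (∀ k, IsFiniteMeasure (ϑ k)) ∧
  (∀ k, ϑ k Qᶜ = 0) ∧
  (∀ x ∈ Q, (∑ k, ϑ k (shift Cset x)) = 0) ∧
  BddAbove {x : ℝ | 0 ≤ x ∧ 0 < ∑ k, ϑ k (Set.Ici x ×ˢ Set.Ici (0:ℝ))} ∧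
  (∀ ε : ℝ, 0 < ε → ∃ k, 0 < Gk (D.Γ k) (wMeas ϑ - ε))

/-- `δ⁺_w`: the Dirac measure at `w` if `w > 0`, and the zero measure otherwise. -/
def deltaPlus (w : ℝ) : MeasureTheory.Measure ℝ :=
  if 0 < w then MeasureTheory.Measure.dirac w else 0

instance (w : ℝ) : SFinite (deltaPlus w) := by
  unfold deltaPlus; split_ifs <;> infer_instance

/-- `(δ⁺_w × Γ)(B)`, as a real number. -/
def kern (Γ : MeasureTheory.Measure ℝ) (w : ℝ) (B : Set (ℝ × ℝ)) : ℝ :=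
  (((deltaPlus w).prod Γ) B).toReal

/-- A (measure-valued) fluid model solution with initial measure `ϑ`: a family
`ζ(t) = (ζ_1(t),…,ζ_K(t))` of finite Borel measures on `[0,∞)²` with `ζ(0) = ϑ` satisfying
`ζ_k(t)(B) = ϑ_k(B_t) + λ_k ∫_0^t (δ⁺_{w(s)} × Γ_k)(B_{t−s}) ds` for every Borel
`B ⊆ [0,∞)²` and `t ≥ 0`, where `w` is the (unique) workload fluid model solution with
`w(0) = w_ϑ`. -/
def IsFluidSol {K : ℕ} (D : Data K) (ϑ : Fin K → MeasureTheory.Measure (ℝ × ℝ))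
    (ζ : ℝ → Fin K → MeasureTheory.Measure (ℝ × ℝ)) : Prop :=
  ∃ w : ℝ → ℝ, IsWorkloadSol D w ∧ w 0 = wMeas ϑ ∧
    (∀ t : ℝ, 0 ≤ t → ∀ k, IsFiniteMeasure (ζ t k) ∧ ζ t k Qᶜ = 0) ∧
    (∀ k, ζ 0 k = ϑ k) ∧
    (∀ k, ∀ B : Set (ℝ × ℝ), B ⊆ Q → MeasurableSet B → ∀ t : ℝ, 0 ≤ t →
      IntervalIntegrable (fun s => kern (D.Γ k) (w s) (shiftd B (t - s))) volume 0 t ∧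
      ζ t k B = ϑ k (shiftd B t) +
        ENNReal.ofReal (D.lam k * ∫ s in (0:ℝ)..t, kern (D.Γ k) (w s) (shiftd B (t - s))))

/-- The candidate invariant state `θ^w`:
`θ^w_k(B) = λ_k ∫_0^w Γ_k({p ≥ u : (w−u, p−u) ∈ B}) du`. -/
def thetaW {K : ℕ} (D : Data K) (w : ℝ) (k : Fin K) : MeasureTheory.Measure (ℝ × ℝ) :=
  ENNReal.ofReal (D.lam k) •
    MeasureTheory.Measure.map (fun up : ℝ × ℝ => (w - up.1, up.2 - up.1))
      ((((MeasureTheory.volume.restrict (Set.Ioo (0:ℝ) w))).prod (D.Γ k)).restrict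
        {up : ℝ × ℝ | up.1 ≤ up.2})

/-! ### Auxiliary lemmas -/

section GkLemmas

variable {Γ : Measure ℝ} [IsProbabilityMeasure Γ]

lemma Gk_nonneg (x : ℝ) : 0 ≤ Gk Γ x := ENNReal.toReal_nonneg

lemma Gk_antitone : Antitone (Gk Γ) := fun x y hxy => by
  unfold Gk
  exact ENNReal.toReal_mono (measure_ne_top _ _) (measure_mono (Ioi_subset_Ioi hxy))

lemma Gk_zero (hneg : Γ (Set.Iio 0) = 0) (h0 : Γ {(0:ℝ)} = 0) : Gk Γ 0 = 1 := by
  unfold Gk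
  have : Γ (Set.Iic 0) = 0 := by
    rw [← Iio_union_right, measure_union_null hneg h0]
  have h := prob_add_prob_compl (μ := Γ) (measurableSet_Iic (a := (0:ℝ)))
  rw [this, zero_add, compl_Iic] at h
  simp [h]

lemma continuous_Gk (hatom : ∀ x : ℝ, Γ {x} = 0) : Continuous (Gk Γ) := by
  rw [Metric.continuous_iff]
  intro x₀ ε hε
  have hInter : (⋂ n : ℕ, Set.Ioc (x₀ - 1/(n+1)) (x₀ + 1/(n+1))) = {x₀} := by
    ext x
    simp only [mem_iInter, mem_Ioc, mem_singleton_iff]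
    constructor
    · intro h
      have h1 : x ≤ x₀ := by
        have := tendsto_one_div_add_atTop_nhds_zero_nat (𝕜 := ℝ)
        have h2 : Tendsto (fun n : ℕ => x₀ + 1/(n+1 : ℝ)) atTop (𝓝 (x₀ + 0)) :=
          tendsto_const_nhds.add (by exact_mod_cast this)
        rw [add_zero] at h2
        exact ge_of_tendsto h2 (Eventually.of_forall fun n => (h n).2)
      have h2 : x₀ ≤ x := by
        have := tendsto_one_div_add_atTop_nhds_zero_nat (𝕜 := ℝ)
        have h2 : Tendsto (fun n : ℕ => x₀ - 1/(n+1 : ℝ)) atTop (𝓝 (x₀ - 0)) :=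
          tendsto_const_nhds.sub (by exact_mod_cast this)
        rw [sub_zero] at h2
        exact le_of_tendsto h2 (Eventually.of_forall fun n => le_of_lt (h n).1)
      linarith
    · rintro rfl
      intro n
      have : (0:ℝ) < 1/(n+1) := by positivity
      constructor <;> linarith
  have htend : Tendsto (fun n : ℕ => Γ (Set.Ioc (x₀ - 1/(n+1)) (x₀ + 1/(n+1)))) atTop
      (𝓝 (Γ {x₀})) := by
    have := tendsto_measure_iInter_atTop (μ := Γ)
      (s := fun n : ℕ => Set.Ioc (x₀ - 1/(n+1)) (x₀ + 1/(n+1)))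
      (fun n => (measurableSet_Ioc).nullMeasurableSet)
      (fun m n hmn => Ioc_subset_Ioc (by
        have : 1/(n+1:ℝ) ≤ 1/(m+1) := by
          apply one_div_le_one_div_of_le (by positivity) (by exact_mod_cast by linarith)
        linarith) (by
        have : 1/(n+1:ℝ) ≤ 1/(m+1) := by
          apply one_div_le_one_div_of_le (by positivity) (by exact_mod_cast by linarith)
        linarith))
      ⟨0, measure_ne_top _ _⟩
    rwa [hInter] at this
  rw [hatom x₀] at htend
  have : ∀ᶠ n : ℕ in atTop, Γ (Set.Ioc (x₀ - 1/(n+1)) (x₀ + 1/(n+1))) < ENNReal.ofReal ε := by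
    apply htend.eventually_lt_const
    simp [hε]
  obtain ⟨n, hn⟩ := this.exists
  refine ⟨1/(n+1), by positivity, fun y hy => ?_⟩
  rw [Real.dist_eq] at hy
  have key : ∀ a b : ℝ, a ≤ b → Gk Γ a - Gk Γ b = (Γ (Set.Ioc a b)).toReal := by
    intro a b hab
    have : Set.Ioi a = Set.Ioc a b ∪ Set.Ioi b := (Ioc_union_Ioi_eq_Ioi hab).symm
    unfold Gk
    rw [this, measure_union (Ioc_disjoint_Ioi le_rfl) measurableSet_Ioi,
      ENNReal.toReal_add (measure_ne_top _ _) (measure_ne_top _ _)]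
    ring
  have hd := abs_lt.mp hy
  have habs : |Gk Γ y - Gk Γ x₀| ≤ (Γ (Set.Ioc (x₀ - 1/(n+1)) (x₀ + 1/(n+1)))).toReal := by
    rcases le_total y x₀ with h | h
    · rw [abs_of_nonneg (by linarith [Gk_antitone (Γ := Γ) h]), key _ _ h]
      exact ENNReal.toReal_mono (measure_ne_top _ _)
        (measure_mono (Ioc_subset_Ioc (by linarith [hd.1]) (by linarith)))
    · rw [abs_of_nonpos (by linarith [Gk_antitone (Γ := Γ) h]), neg_sub, key _ _ h]
      exact ENNReal.toReal_mono (measure_ne_top _ _)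
        (measure_mono (Ioc_subset_Ioc (by linarith) (by linarith [hd.2])))
  rw [Real.dist_eq]
  calc |Gk Γ y - Gk Γ x₀| ≤ _ := habs
    _ < ε := ENNReal.toReal_lt_of_lt_ofReal hn

lemma Gk_tendsto_zero : Tendsto (fun n : ℕ => Gk Γ n) atTop (𝓝 0) := by
  have h1 : Tendsto (fun n : ℕ => Γ (Set.Ioi (n:ℝ))) atTop (𝓝 (Γ (⋂ n : ℕ, Set.Ioi (n:ℝ)))) :=
    tendsto_measure_iInter_atTop (fun n => measurableSet_Ioi.nullMeasurableSet)
      (fun m n hmn => Ioi_subset_Ioi (by exact_mod_cast hmn)) ⟨0, measure_ne_top _ _⟩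
  have h2 : (⋂ n : ℕ, Set.Ioi (n:ℝ)) = ∅ := by
    ext x
    simp only [mem_iInter, mem_Ioi, mem_empty_iff_false, iff_false, not_forall, not_lt]
    obtain ⟨n, hn⟩ := exists_nat_gt x
    exact ⟨n, le_of_lt hn⟩
  rw [h2, measure_empty] at h1
  have := (ENNReal.tendsto_toReal (by simp)).comp h1
  exact this

lemma measure_inter_nonneg (hneg : Γ (Set.Iio 0) = 0) (s : Set ℝ) :
    Γ ({p : ℝ | 0 ≤ p} ∩ s) = Γ s := by
  apply le_antisymm (measure_mono inter_subset_right)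
  calc Γ s ≤ Γ (({p : ℝ | 0 ≤ p} ∩ s) ∪ Set.Iio 0) := by
        apply measure_mono
        intro p hp
        rcases le_or_gt 0 p with h | h
        · exact Or.inl ⟨h, hp⟩
        · exact Or.inr h
    _ ≤ Γ ({p : ℝ | 0 ≤ p} ∩ s) + Γ (Set.Iio 0) := measure_union_le _ _
    _ = Γ ({p : ℝ | 0 ≤ p} ∩ s) := by rw [hneg, add_zero]

end GkLemmas

section SLemmas

variable {K : ℕ} (D : Data K)

/-- `S u = Σ ρ_k G_k(u)`. -/
def Sfun (u : ℝ) : ℝ := ∑ k, D.rho k * Gk (D.Γ k) u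

lemma rho_pos (k : Fin K) : 0 < D.rho k := div_pos (D.lam_pos k) (D.mu_pos k)

lemma Sfun_continuous : Continuous (Sfun D) :=
  continuous_finset_sum _ fun k _ =>
    (continuous_const.mul (continuous_Gk (D.Γ_noAtom k)))

lemma Sfun_antitone : Antitone (Sfun D) := fun x y hxy =>
  Finset.sum_le_sum fun k _ =>
    mul_le_mul_of_nonneg_left (Gk_antitone hxy) (le_of_lt (rho_pos D k))

lemma Sfun_zero : Sfun D 0 = D.rhoTot := by
  unfold Sfun Data.rhoTot
  congr 1
  ext k
  rw [Gk_zero (D.Γ_null_neg k) (D.Γ_noAtom k 0), mul_one]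

lemma Sfun_exists_lt_one : ∃ M : ℝ, 0 ≤ M ∧ Sfun D M < 1 := by
  have h : Tendsto (fun n : ℕ => Sfun D n) atTop (𝓝 0) := by
    have : Tendsto (fun n : ℕ => ∑ k, D.rho k * Gk (D.Γ k) n) atTop
        (𝓝 (∑ k : Fin K, D.rho k * 0)) :=
      tendsto_finset_sum _ fun k _ => (Gk_tendsto_zero (Γ := D.Γ k)).const_mul _
    simpa [Sfun] using this
  have := h.eventually_lt_const (show (0:ℝ) < 1 by norm_num)
  obtain ⟨n, hn⟩ := this.exists
  exact ⟨n, Nat.cast_nonneg n, hn⟩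

lemma wl_mem_upper : ∀ M, 0 ≤ M → Sfun D M < 1 →
    (∀ u ∈ {u : ℝ | 0 ≤ u ∧ 1 ≤ Sfun D u}, u ≤ M) := by
  intro M _ hM u hu
  by_contra h
  push_neg at h
  exact absurd (le_trans hu.2 (Sfun_antitone D (le_of_lt h))) (not_le.mpr hM)

lemma wl_pos : 0 < wl D := by
  obtain ⟨M, hM0, hM⟩ := Sfun_exists_lt_one D
  have hS0 : 1 < Sfun D 0 := by rw [Sfun_zero]; exact D.rho_gt_one
  have hopen : IsOpen {u : ℝ | 1 < Sfun D u} := isOpen_lt continuous_const (Sfun_continuous D)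
  obtain ⟨δ, hδ, hball⟩ := Metric.isOpen_iff.mp hopen 0 hS0
  have hmem : δ/2 ∈ {u : ℝ | 0 ≤ u ∧ 1 < Sfun D u} :=
    ⟨by positivity, hball (Metric.mem_ball.mpr (by
      rw [Real.dist_eq, sub_zero, abs_of_nonneg (by positivity)]; linarith))⟩
  have hbdd : BddAbove {u : ℝ | 0 ≤ u ∧ 1 < Sfun D u} :=
    ⟨M, fun u hu => wl_mem_upper D M hM0 hM u ⟨hu.1, le_of_lt hu.2⟩⟩
  calc (0:ℝ) < δ/2 := by positivity
    _ ≤ wl D := le_csSup hbdd hmem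

lemma Sfun_eq_one {w : ℝ} (h₁ : wl D ≤ w) (h₂ : w ≤ wu D) : Sfun D w = 1 := by
  obtain ⟨M, hM0, hM⟩ := Sfun_exists_lt_one D
  have hS0 : 1 < Sfun D 0 := by rw [Sfun_zero]; exact D.rho_gt_one
  have hbddu : BddAbove {u : ℝ | 0 ≤ u ∧ 1 ≤ Sfun D u} :=
    ⟨M, fun u hu => wl_mem_upper D M hM0 hM u hu⟩
  have hclosed : IsClosed {u : ℝ | 0 ≤ u ∧ 1 ≤ Sfun D u} :=
    (isClosed_le continuous_const continuous_id).inter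
      (isClosed_le continuous_const (Sfun_continuous D))
  have hne : {u : ℝ | 0 ≤ u ∧ 1 ≤ Sfun D u}.Nonempty := ⟨0, le_refl 0, le_of_lt hS0⟩
  have hwu_mem : wu D ∈ {u : ℝ | 0 ≤ u ∧ 1 ≤ Sfun D u} :=
    hclosed.csSup_mem hne hbddu
  have hge : 1 ≤ Sfun D w := le_trans hwu_mem.2 (Sfun_antitone D h₂)
  have hle : Sfun D w ≤ 1 := by
    by_contra h
    push_neg at h
    have hopen : IsOpen {u : ℝ | 1 < Sfun D u} := isOpen_lt continuous_const (Sfun_continuous D)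
    obtain ⟨δ, hδ, hball⟩ := Metric.isOpen_iff.mp hopen w h
    have hmem : w + δ/2 ∈ {u : ℝ | 0 ≤ u ∧ 1 < Sfun D u} := by
      constructor
      · have hw0 : 0 < w := lt_of_lt_of_le (wl_pos D) h₁
        positivity
      · exact hball (Metric.mem_ball.mpr (by
          rw [Real.dist_eq, add_sub_cancel_left, abs_of_nonneg (by linarith)]; linarith))
    have hbdd : BddAbove {u : ℝ | 0 ≤ u ∧ 1 < Sfun D u} :=
      ⟨M, fun u hu => wl_mem_upper D M hM0 hM u ⟨hu.1, le_of_lt hu.2⟩⟩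
    have : w + δ/2 ≤ wl D := le_csSup hbdd hmem
    linarith
  linarith

lemma exists_Gk_pos {w : ℝ} (h₁ : wl D ≤ w) (h₂ : w ≤ wu D) :
    ∃ k, 0 < Gk (D.Γ k) w := by
  by_contra h
  push_neg at h
  have : Sfun D w = 0 := Finset.sum_eq_zero fun k _ => by
    have := le_antisymm (h k) (Gk_nonneg (Γ := D.Γ k) w)
    rw [this, mul_zero]
  rw [Sfun_eq_one D h₁ h₂] at this
  norm_num at this

end SLemmas
section ThetaLemmas

/-- The slice function `φ_B(v) = Γ {p | (w - v, p - v) ∈ B}`. -/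
def phiB (Γ : MeasureTheory.Measure ℝ) (w : ℝ) (B : Set (ℝ × ℝ)) : ℝ → ℝ≥0∞ :=
  fun v => Γ {p : ℝ | (w - v, p - v) ∈ B}

lemma measurable_Tmap (w : ℝ) : Measurable (fun up : ℝ × ℝ => (w - up.1, up.2 - up.1)) :=
  ((measurable_const.sub measurable_fst)).prod (measurable_snd.sub measurable_fst)

lemma measurableSet_S : MeasurableSet {up : ℝ × ℝ | up.1 ≤ up.2} :=
  measurableSet_le measurable_fst measurable_snd

lemma measurableSet_Q : MeasurableSet Q :=
  (measurableSet_le measurable_const measurable_fst).inter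
    (measurableSet_le measurable_const measurable_snd)

lemma measurableSet_shift {B : Set (ℝ × ℝ)} (hB : MeasurableSet B) (x : ℝ × ℝ) :
    MeasurableSet (shift B x) := by
  have : shift B x = Q ∩ (fun y : ℝ × ℝ => (y.1 - x.1, y.2 - x.2)) ⁻¹' B := rfl
  rw [this]
  exact measurableSet_Q.inter
    (((measurable_fst.sub measurable_const).prod (measurable_snd.sub measurable_const)) hB)

lemma measurableSet_Cset : MeasurableSet Cset := by
  have : Cset = ({p : ℝ × ℝ | 0 ≤ p.1} ∩ {p : ℝ × ℝ | p.2 = 0}) ∪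
      ({p : ℝ × ℝ | p.1 = 0} ∩ {p : ℝ × ℝ | 0 ≤ p.2}) := rfl
  rw [this]
  exact (((measurableSet_le measurable_const measurable_fst)).inter
    (measurable_snd (measurableSet_singleton 0))).union
    (((measurable_fst (measurableSet_singleton 0))).inter
    (measurableSet_le measurable_const measurable_snd))

variable {K : ℕ} (D : Data K) (w : ℝ)

lemma thetaW_apply (k : Fin K) {B : Set (ℝ × ℝ)} (hB : MeasurableSet B) :
    thetaW D w k B = ENNReal.ofReal (D.lam k) *
      ∫⁻ u in Set.Ioo 0 w, (D.Γ k) {p : ℝ | (w - u, p - u) ∈ B ∧ u ≤ p} := by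
  unfold thetaW
  rw [Measure.smul_apply, smul_eq_mul]
  congr 1
  rw [Measure.map_apply (measurable_Tmap w) hB,
    Measure.restrict_apply (measurable_Tmap w hB),
    Measure.prod_apply ((measurable_Tmap w hB).inter measurableSet_S)]
  rfl

lemma thetaW_apply_subQ (k : Fin K) {B : Set (ℝ × ℝ)} (hB : MeasurableSet B) (hBQ : B ⊆ Q) :
    thetaW D w k B = ENNReal.ofReal (D.lam k) *
      ∫⁻ u in Set.Ioo 0 w, phiB (D.Γ k) w B u := by
  rw [thetaW_apply D w k hB]
  congr 1
  apply lintegral_congr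
  intro u
  congr 1
  ext p
  simp only [mem_setOf_eq, and_iff_left_iff_imp]
  intro hp
  have h2 : (0:ℝ) ≤ p - u := (hBQ hp).2
  linarith

lemma phiB_measurable {Γ : Measure ℝ} [SFinite Γ] {B : Set (ℝ × ℝ)} (hB : MeasurableSet B) :
    Measurable (phiB Γ w B) := by
  have h := measurable_measure_prodMk_left (ν := Γ) (measurable_Tmap w hB)
  exact h

lemma phiB_le_one {Γ : Measure ℝ} [IsProbabilityMeasure Γ] (B : Set (ℝ × ℝ)) (v : ℝ) :
    phiB Γ w B v ≤ 1 := prob_le_one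

lemma phiB_eq_zero {Γ : Measure ℝ} {B : Set (ℝ × ℝ)} (hBQ : B ⊆ Q) {v : ℝ} (hv : w < v) :
    phiB Γ w B v = 0 := by
  unfold phiB
  convert measure_empty (μ := Γ)
  ext p
  simp only [mem_setOf_eq, mem_empty_iff_false, iff_false]
  intro hp
  have := (hBQ hp).1
  simp only at this
  linarith

instance thetaW_finite (k : Fin K) : IsFiniteMeasure (thetaW D w k) := by
  constructor
  rw [thetaW_apply D w k MeasurableSet.univ]
  have : (∫⁻ u in Set.Ioo 0 w, (D.Γ k) {p : ℝ | (w - u, p - u) ∈ Set.univ ∧ u ≤ p}) ≤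
      ∫⁻ _ in Set.Ioo 0 w, 1 := lintegral_mono fun u => prob_le_one
  rw [setLIntegral_const] at this
  exact ENNReal.mul_lt_top ENNReal.ofReal_lt_top
    (lt_of_le_of_lt this (by simp [Real.volume_Ioo]))

lemma thetaW_comp_Q (k : Fin K) : thetaW D w k Qᶜ = 0 := by
  rw [thetaW_apply D w k measurableSet_Q.compl]
  have : ∫⁻ u in Set.Ioo 0 w, (D.Γ k) {p : ℝ | (w - u, p - u) ∈ Qᶜ ∧ u ≤ p} =
      ∫⁻ _ in Set.Ioo 0 w, 0 := by
    apply setLIntegral_congr_fun measurableSet_Ioo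
    intro u hu
    convert measure_empty (μ := D.Γ k)
    ext p
    simp only [mem_setOf_eq, mem_empty_iff_false, iff_false, not_and]
    intro hp hup
    exact absurd ⟨by simp only; linarith [hu.2], by simp only; linarith⟩ hp
  rw [this, lintegral_zero, mul_zero]

lemma thetaW_horiz (k : Fin K) (c : ℝ) : thetaW D w k {y : ℝ × ℝ | y.2 = c} = 0 := by
  rw [thetaW_apply D w k (B := {y : ℝ × ℝ | y.2 = c})
    (measurable_snd (measurableSet_singleton c))]
  have : ∫⁻ u in Set.Ioo 0 w, (D.Γ k) {p : ℝ | (w - u, p - u) ∈ {y : ℝ × ℝ | y.2 = c} ∧ u ≤ p} =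
      ∫⁻ _ in Set.Ioo 0 w, 0 := by
    apply setLIntegral_congr_fun measurableSet_Ioo
    intro u _
    refine measure_mono_null ?_ (D.Γ_noAtom k (u + c))
    intro p hp
    have : p - u = c := hp.1
    simp only [mem_singleton_iff]
    linarith
  rw [this, lintegral_zero, mul_zero]

lemma thetaW_vert (k : Fin K) (c : ℝ) : thetaW D w k {y : ℝ × ℝ | y.1 = c} = 0 := by
  rw [thetaW_apply D w k (B := {y : ℝ × ℝ | y.1 = c})
    (measurable_fst (measurableSet_singleton c))]
  have hzero : ∀ u : ℝ, u ≠ w - c →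
      (D.Γ k) {p : ℝ | (w - u, p - u) ∈ {y : ℝ × ℝ | y.1 = c} ∧ u ≤ p} = 0 := by
    intro u hne
    convert measure_empty (μ := D.Γ k)
    ext p
    simp only [mem_setOf_eq, mem_empty_iff_false, iff_false, not_and]
    intro hp
    exact absurd (by linarith [show w - u = c from hp] : u = w - c) hne
  have : ∫⁻ u in Set.Ioo 0 w, (D.Γ k) {p : ℝ | (w - u, p - u) ∈ {y : ℝ × ℝ | y.1 = c} ∧ u ≤ p} =
      0 := by
    rw [← lintegral_zero (μ := volume.restrict (Set.Ioo 0 w))]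
    apply lintegral_congr_ae
    apply ae_restrict_of_ae
    rw [ae_iff]
    refine measure_mono_null ?_ (Real.volume_singleton (a := w - c))
    intro u hu
    simp only [mem_setOf_eq] at hu
    simp only [mem_singleton_iff]
    by_contra hne2
    exact hu (hzero u hne2)
  rw [this, mul_zero]

lemma thetaW_corner (k : Fin K) (x : ℝ × ℝ) : thetaW D w k (shift Cset x) = 0 := by
  refine measure_mono_null ?_
    (measure_union_null (thetaW_horiz D w k x.2) (thetaW_vert D w k x.1))
  rintro y ⟨_, hy⟩
  rcases hy with ⟨_, h2⟩ | ⟨h1, _⟩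
  · have h2' : y.2 - x.2 = 0 := h2
    exact Or.inl (by simp only [mem_setOf_eq]; linarith)
  · have h1' : y.1 - x.1 = 0 := h1
    exact Or.inr (by simp only [mem_setOf_eq]; linarith)

lemma thetaW_Ici_zero (k : Fin K) {x : ℝ} (hx : w < x) :
    thetaW D w k (Set.Ici x ×ˢ Set.Ici (0:ℝ)) = 0 := by
  rw [thetaW_apply D w k (measurableSet_Ici.prod measurableSet_Ici)]
  have : ∫⁻ u in Set.Ioo 0 w,
      (D.Γ k) {p : ℝ | (w - u, p - u) ∈ Set.Ici x ×ˢ Set.Ici (0:ℝ) ∧ u ≤ p} =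
      ∫⁻ _ in Set.Ioo 0 w, 0 := by
    apply setLIntegral_congr_fun measurableSet_Ioo
    intro u hu
    convert measure_empty (μ := D.Γ k)
    ext p
    simp only [mem_setOf_eq, mem_prod, mem_Ici, mem_empty_iff_false, iff_false, not_and]
    intro hp
    exact absurd hp.1 (by simp only [not_le]; linarith [hu.1])
  rw [this, lintegral_zero, mul_zero]

lemma thetaW_Ici_pos {x : ℝ} (hx0 : 0 ≤ x) (hxw : x < w) (k : Fin K)
    (hk : 0 < Gk (D.Γ k) w) : 0 < thetaW D w k (Set.Ici x ×ˢ Set.Ici (0:ℝ)) := by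
  have hΓpos : 0 < (D.Γ k) (Set.Ioi w) := by
    by_contra h
    push_neg at h
    have : (D.Γ k) (Set.Ioi w) = 0 := le_antisymm h zero_le
    unfold Gk at hk
    rw [this] at hk
    simp at hk
  rw [thetaW_apply_subQ D w k (measurableSet_Ici.prod measurableSet_Ici)
    (by rintro ⟨a, b⟩ ⟨ha, hb⟩; exact ⟨le_trans hx0 ha, hb⟩)]
  have hlow : (D.Γ k) (Set.Ioi w) * ENNReal.ofReal (w - x) ≤
      ∫⁻ u in Set.Ioo 0 w, phiB (D.Γ k) w (Set.Ici x ×ˢ Set.Ici (0:ℝ)) u := by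
    calc (D.Γ k) (Set.Ioi w) * ENNReal.ofReal (w - x)
        = ∫⁻ _ in Set.Ioo 0 (w - x), (D.Γ k) (Set.Ioi w) := by
          rw [setLIntegral_const, Real.volume_Ioo, sub_zero]
      _ ≤ ∫⁻ u in Set.Ioo 0 (w - x), phiB (D.Γ k) w (Set.Ici x ×ˢ Set.Ici (0:ℝ)) u := by
          apply setLIntegral_mono' measurableSet_Ioo
          intro u hu
          apply measure_mono
          intro p hp
          simp only [mem_Ioi] at hp
          exact ⟨by simp only [mem_Ici]; linarith [hu.2], by simp only [mem_Ici]; linarith [hu.1, hu.2]⟩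
      _ ≤ _ := lintegral_mono_set (Ioo_subset_Ioo le_rfl (by linarith))
  have hpos : 0 < (D.Γ k) (Set.Ioi w) * ENNReal.ofReal (w - x) :=
    ENNReal.mul_pos (ne_of_gt hΓpos) (ne_of_gt (ENNReal.ofReal_pos.mpr (by linarith)))
  have hlam : 0 < ENNReal.ofReal (D.lam k) := ENNReal.ofReal_pos.mpr (D.lam_pos k)
  exact ENNReal.mul_pos (ne_of_gt hlam) (ne_of_gt (lt_of_lt_of_le hpos hlow))

end ThetaLemmas
section FluidLemmas

variable {K : ℕ} (D : Data K)

lemma shiftd_subset_Q (B : Set (ℝ × ℝ)) (t : ℝ) : shiftd B t ⊆ Q := fun _ hy => hy.1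

lemma phiB_shiftd (Γ : Measure ℝ) {w : ℝ} {B : Set (ℝ × ℝ)} (hBQ : B ⊆ Q) {t : ℝ}
    (ht : 0 ≤ t) (u : ℝ) : phiB Γ w (shiftd B t) u = phiB Γ w B (u + t) := by
  unfold phiB shiftd shift
  congr 1
  ext p
  simp only [mem_setOf_eq]
  constructor
  · rintro ⟨_, hmem⟩
    convert hmem using 2 <;> ring
  · intro hmem
    have hq := hBQ hmem
    have hq1 : (0:ℝ) ≤ w - (u + t) := hq.1
    have hq2 : (0:ℝ) ≤ p - (u + t) := hq.2
    refine ⟨⟨show (0:ℝ) ≤ w - u by linarith, show (0:ℝ) ≤ p - u by linarith⟩, ?_⟩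
    convert hmem using 2 <;> ring

lemma lintegral_phiB_shift (Γ : Measure ℝ) [SFinite Γ] (w : ℝ) {B : Set (ℝ × ℝ)}
    (hB : MeasurableSet B) (t : ℝ) :
    ∫⁻ u in Set.Ioo 0 w, phiB Γ w B (u + t) =
      ∫⁻ v in Set.Ioo t (w + t), phiB Γ w B v := by
  have h := (measurePreserving_add_right volume t).setLIntegral_comp_emb
    (measurableEmbedding_addRight t) (phiB Γ w B) (Set.Ioo 0 w)
  rw [h, image_add_const_Ioo, zero_add]

lemma lintegral_phiB_split (Γ : Measure ℝ) [SFinite Γ] {w : ℝ} (hw : 0 < w)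
    {B : Set (ℝ × ℝ)} (hB : MeasurableSet B) (hBQ : B ⊆ Q) {t : ℝ} (ht : 0 ≤ t) :
    ∫⁻ u in Set.Ioo 0 w, phiB Γ w B u =
      (∫⁻ u in Set.Ioo 0 w, phiB Γ w B (u + t)) + ∫⁻ u in Set.Ioo 0 t, phiB Γ w B u := by
  rw [lintegral_phiB_shift Γ w hB t]
  have e1 : volume.restrict (Set.Ioo (0:ℝ) w) = volume.restrict (Set.Ioc 0 w) :=
    Measure.restrict_congr_set Ioo_ae_eq_Ioc
  have e2 : volume.restrict (Set.Ioo t (w + t)) = volume.restrict (Set.Ioc t (w + t)) :=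
    Measure.restrict_congr_set Ioo_ae_eq_Ioc
  have e3 : volume.restrict (Set.Ioo (0:ℝ) t) = volume.restrict (Set.Ioc 0 t) :=
    Measure.restrict_congr_set Ioo_ae_eq_Ioc
  rw [e1, e2, e3]
  have hzero : ∀ a b : ℝ, w ≤ a → ∫⁻ u in Set.Ioc a b, phiB Γ w B u = 0 := by
    intro a b ha
    have : ∫⁻ u in Set.Ioc a b, phiB Γ w B u = ∫⁻ _ in Set.Ioc a b, 0 := by
      apply setLIntegral_congr_fun measurableSet_Ioc
      exact fun v hv => phiB_eq_zero _ hBQ (lt_of_le_of_lt ha hv.1)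
    rw [this, lintegral_zero]
  have key1 : ∫⁻ u in Set.Ioc (0:ℝ) w, phiB Γ w B u =
      ∫⁻ u in Set.Ioc (0:ℝ) (w + t), phiB Γ w B u := by
    rw [← Ioc_union_Ioc_eq_Ioc (le_of_lt hw) (by linarith : w ≤ w + t),
      lintegral_union measurableSet_Ioc (Ioc_disjoint_Ioc_of_le le_rfl), hzero w (w + t) le_rfl, add_zero]
  have key2 : ∫⁻ u in Set.Ioc (0:ℝ) (w + t), phiB Γ w B u =
      (∫⁻ u in Set.Ioc (0:ℝ) t, phiB Γ w B u) + ∫⁻ u in Set.Ioc t (w + t), phiB Γ w B u := by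
    rw [← Ioc_union_Ioc_eq_Ioc ht (by linarith : t ≤ w + t),
      lintegral_union measurableSet_Ioc (Ioc_disjoint_Ioc_of_le le_rfl)]
  rw [key1, key2, add_comm]

lemma kern_shiftd {Γ : Measure ℝ} [IsProbabilityMeasure Γ] {w : ℝ} (hw : 0 < w)
    (hneg : Γ (Set.Iio 0) = 0) {B : Set (ℝ × ℝ)} (hB : MeasurableSet B) (r : ℝ) :
    kern Γ w (shiftd B r) = (phiB Γ w B r).toReal := by
  unfold kern deltaPlus shiftd
  rw [if_pos hw, Measure.dirac_prod,
    Measure.map_apply measurable_prodMk_left (measurableSet_shift hB (r, r))]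
  congr 1
  have heq : Prod.mk w ⁻¹' shift B (r, r) = {p : ℝ | 0 ≤ p} ∩ {p : ℝ | (w - r, p - r) ∈ B} := by
    ext p
    constructor
    · rintro ⟨⟨_, h2⟩, hmem⟩
      exact ⟨h2, hmem⟩
    · rintro ⟨h0, hmem⟩
      exact ⟨⟨le_of_lt hw, h0⟩, hmem⟩
  rw [heq, measure_inter_nonneg hneg]
  rfl

lemma kern_integrable_and_eq {Γ : Measure ℝ} [IsProbabilityMeasure Γ] {w : ℝ} (hw : 0 < w)
    (hneg : Γ (Set.Iio 0) = 0) {B : Set (ℝ × ℝ)} (hB : MeasurableSet B) {t : ℝ} (ht : 0 ≤ t) :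
    IntervalIntegrable (fun s => kern Γ w (shiftd B (t - s))) volume 0 t ∧
      ENNReal.ofReal (∫ s in (0:ℝ)..t, kern Γ w (shiftd B (t - s))) =
        ∫⁻ u in Set.Ioo 0 t, phiB Γ w B u := by
  have hk : (fun s => kern Γ w (shiftd B (t - s))) =
      fun s => (phiB Γ w B (t - s)).toReal := by
    funext s
    exact kern_shiftd hw hneg hB (t - s)
  have hphi : Measurable (phiB Γ w B) := phiB_measurable w hB
  have hmeas : Measurable fun s => (phiB Γ w B (t - s)).toReal :=
    ENNReal.measurable_toReal.comp (hphi.comp (measurable_const.sub measurable_id))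
  have hbound : ∀ s : ℝ, ‖(phiB Γ w B (t - s)).toReal‖ ≤ 1 := by
    intro s
    rw [Real.norm_eq_abs, abs_of_nonneg ENNReal.toReal_nonneg]
    calc (phiB Γ w B (t - s)).toReal ≤ (1 : ℝ≥0∞).toReal :=
      ENNReal.toReal_mono (by simp) (phiB_le_one w B (t - s))
    _ = 1 := by simp
  have hint : IntervalIntegrable (fun s => (phiB Γ w B (t - s)).toReal) volume 0 t := by
    rw [intervalIntegrable_iff_integrableOn_Ioc_of_le ht]
    exact Integrable.mono' (integrable_const 1) hmeas.aestronglyMeasurable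
      (Eventually.of_forall fun s => hbound s)
  constructor
  · rw [hk]; exact hint
  · rw [hk]
    have hrefl : ∫⁻ s in Set.Ioc 0 t, phiB Γ w B (t - s) =
        ∫⁻ u in Set.Ioo 0 t, phiB Γ w B u := by
      have hpres : MeasurePreserving (fun x : ℝ => t - x) volume volume :=
        ⟨measurable_const.sub measurable_id, Measure.map_sub_left_eq_self volume t⟩
      have h := hpres.setLIntegral_comp_emb
        ((MeasurableEquiv.subLeft t).measurableEmbedding) (phiB Γ w B) (Set.Ioc 0 t)
      rw [h, image_const_sub_Ioc, sub_self, sub_zero,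
        ← Measure.restrict_congr_set Ioo_ae_eq_Ico]
    have hfin : (∫⁻ s in Set.Ioc 0 t, phiB Γ w B (t - s)) ≠ ⊤ := by
      have : (∫⁻ s in Set.Ioc 0 t, phiB Γ w B (t - s)) ≤ ∫⁻ _ in Set.Ioc (0:ℝ) t, 1 :=
        lintegral_mono fun s => phiB_le_one w B (t - s)
      rw [setLIntegral_const] at this
      exact ne_top_of_le_ne_top (by simp [Real.volume_Ioc]) this
    have haem : AEMeasurable (fun s => phiB Γ w B (t - s)) (volume.restrict (Set.Ioc 0 t)) :=
      Measurable.aemeasurable (by exact hphi.comp (measurable_const.sub measurable_id))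
    rw [intervalIntegral.integral_of_le ht,
      integral_toReal haem
        (Eventually.of_forall fun s =>
          lt_of_le_of_lt (phiB_le_one w B _) (by simp : (1:ℝ≥0∞) < ⊤)),
      ENNReal.ofReal_toReal hfin, hrefl]

end FluidLemmas
section MainLemmas

variable {K : ℕ} (D : Data K)

lemma thetaW_E_subset (w : ℝ) :
    {x : ℝ | 0 ≤ x ∧ 0 < ∑ k, thetaW D w k (Set.Ici x ×ˢ Set.Ici (0:ℝ))} ⊆ Set.Iic w := by
  intro x hx
  rw [Set.mem_setOf_eq] at hx
  rw [Set.mem_Iic]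
  by_contra h
  push_neg at h
  rw [Finset.sum_eq_zero (fun k _ => thetaW_Ici_zero D w k h)] at hx
  exact lt_irrefl _ hx.2

lemma wMeas_thetaW {w : ℝ} (h₁ : wl D ≤ w) (h₂ : w ≤ wu D) : wMeas (thetaW D w) = w := by
  have hw : 0 < w := lt_of_lt_of_le (wl_pos D) h₁
  obtain ⟨k, hk⟩ := exists_Gk_pos D h₁ h₂
  have hsup : Set.Ico 0 w ⊆
      {x : ℝ | 0 ≤ x ∧ 0 < ∑ j, thetaW D w j (Set.Ici x ×ˢ Set.Ici (0:ℝ))} := by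
    intro x hx
    refine ⟨hx.1, lt_of_lt_of_le (thetaW_Ici_pos D w hx.1 hx.2 k hk)
      (Finset.single_le_sum (f := fun j => thetaW D w j (Set.Ici x ×ˢ Set.Ici (0:ℝ)))
        (fun j _ => zero_le) (Finset.mem_univ k))⟩
  unfold wMeas
  apply le_antisymm
  · exact csSup_le ⟨0, hsup ⟨le_rfl, hw⟩⟩ fun x hx => thetaW_E_subset D w hx
  · calc w = sSup (Set.Ico 0 w) := (csSup_Ico hw).symm
      _ ≤ _ := csSup_le_csSup ⟨w, fun x hx => thetaW_E_subset D w hx⟩ ⟨0, le_rfl, hw⟩ hsup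

lemma memI_thetaW {w : ℝ} (h₁ : wl D ≤ w) (h₂ : w ≤ wu D) : MemI D (thetaW D w) := by
  refine ⟨fun k => thetaW_finite D w k, fun k => thetaW_comp_Q D w k,
    fun x _ => Finset.sum_eq_zero fun k _ => thetaW_corner D w k x,
    ⟨w, fun x hx => thetaW_E_subset D w hx⟩, fun ε hε => ?_⟩
  obtain ⟨k, hk⟩ := exists_Gk_pos D h₁ h₂
  refine ⟨k, lt_of_lt_of_le hk (Gk_antitone ?_)⟩
  rw [wMeas_thetaW D h₁ h₂]
  linarith

lemma isWorkloadSol_const {w : ℝ} (h₁ : wl D ≤ w) (h₂ : w ≤ wu D) :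
    IsWorkloadSol D (fun _ => w) := by
  have hw : 0 < w := lt_of_lt_of_le (wl_pos D) h₁
  refine ⟨fun t _ => le_of_lt hw, fun k t _ => intervalIntegrable_const, fun t ht => ?_⟩
  have : ∀ k : Fin K, ∫ _ in (0:ℝ)..t, Gk (D.Γ k) w = t * Gk (D.Γ k) w := by
    intro k
    rw [intervalIntegral.integral_const, smul_eq_mul, sub_zero]
  have hsum : ∑ k, D.rho k * ∫ _ in (0:ℝ)..t, Gk (D.Γ k) w = t * Sfun D w := by
    unfold Sfun
    rw [Finset.mul_sum]
    apply Finset.sum_congr rfl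
    intro k _
    rw [this k]
    ring
  rw [hsum, Sfun_eq_one D h₁ h₂, mul_one]
  ring

theorem thetaW_invariant' {w : ℝ} (h₁ : wl D ≤ w) (h₂ : w ≤ wu D) :
    MemI D (thetaW D w) ∧ wMeas (thetaW D w) = w ∧
    IsFluidSol D (thetaW D w) (fun _ => thetaW D w) := by
  have hw : 0 < w := lt_of_lt_of_le (wl_pos D) h₁
  refine ⟨memI_thetaW D h₁ h₂, wMeas_thetaW D h₁ h₂, ?_⟩
  refine ⟨fun _ => w, isWorkloadSol_const D h₁ h₂, (wMeas_thetaW D h₁ h₂).symm,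
    fun t _ k => ⟨thetaW_finite D w k, thetaW_comp_Q D w k⟩, fun k => rfl, ?_⟩
  intro k B hBQ hB t ht
  obtain ⟨hint, heq⟩ := kern_integrable_and_eq (Γ := D.Γ k) hw (D.Γ_null_neg k) hB ht
  refine ⟨hint, ?_⟩
  have hshiftQ : shiftd B t ⊆ Q := shiftd_subset_Q B t
  have hshiftM : MeasurableSet (shiftd B t) := measurableSet_shift hB (t, t)
  rw [thetaW_apply_subQ D w k hB hBQ, thetaW_apply_subQ D w k hshiftM hshiftQ]
  have hcongr : ∫⁻ u in Set.Ioo 0 w, phiB (D.Γ k) w (shiftd B t) u =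
      ∫⁻ u in Set.Ioo 0 w, phiB (D.Γ k) w B (u + t) := by
    apply lintegral_congr
    intro u
    exact phiB_shiftd (D.Γ k) hBQ ht u
  have hofReal : ENNReal.ofReal (D.lam k * ∫ s in (0:ℝ)..t, kern (D.Γ k) w (shiftd B (t - s))) =
      ENNReal.ofReal (D.lam k) * ∫⁻ u in Set.Ioo 0 t, phiB (D.Γ k) w B u := by
    rw [ENNReal.ofReal_mul (le_of_lt (D.lam_pos k)), heq]
  rw [hcongr, hofReal, lintegral_phiB_split (D.Γ k) hw hB hBQ ht, mul_add]

end MainLemmas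
/-- For every `w ∈ [w_l, w_u]`, the measure `θ^w` belongs to `I`,
`w_{θ^w} = w`, and the constant function `ζ(t) = θ^w` is a fluid model solution with
initial measure `θ^w`; i.e. `θ^w` is an invariant state. -/
theorem thetaW_invariant {K : ℕ} (D : Data K) (w : ℝ)
    (h₁ : wl D ≤ w) (h₂ : w ≤ wu D) :
    MemI D (thetaW D w) ∧ wMeas (thetaW D w) = w ∧
    IsFluidSol D (thetaW D w) (fun _ => thetaW D w) :=
  thetaW_invariant' D h₁ h₂

end OverloadedFIFO
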